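/- For each fixed t ∈ ℤ, the function m ↦ ψ̄_t(m) is multiplicative: if m₁, m₂ ∈ ℤ_{>0} with gcd(m₁,m₂) = 1, then ψ̄_t(m₁m₂) = ψ̄_t(m₁)·ψ̄_t(m₂). -/

import Mathlib

open scoped BigOperators Real

/-- An integer is a *discriminant* if it is congruent to 0 or 1 mod 4. -/
def IsDiscriminant (D : ℤ) : Prop := D % 4 = 0 ∨ D % 4 = 1

/-- A *fundamental discriminant* (including `1`, for positive square discriminants). -/
def IsFundamentalDiscriminant (d : ℤ) : Prop :=
  (Squarefree d ∧ d % 4 = 1) ∨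
    (∃ m : ℤ, d = 4 * m ∧ Squarefree m ∧ (m % 4 = 2 ∨ m % 4 = 3))

/-- The Kronecker symbol `(d | m)` for `m > 0`, defined by complete multiplicativity in `m`
from the Jacobi symbol on the odd part and the standard value at `2`. -/
noncomputable def kron (d : ℤ) (m : ℕ) : ℤ :=
  (if d % 2 = 0 then 0 else if d % 8 = 1 ∨ d % 8 = 7 then 1 else -1) ^ (m.factorization 2) *
    jacobiSym d (m / 2 ^ (m.factorization 2))

-- `ψ_D(m) = (d | m / gcd(m, ℓ))` where `D = d ℓ²` with `d` a fundamental discriminant,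
-- with the convention `ψ_0(m) = 1`.
open Classical in
noncomputable def psi (D : ℤ) (m : ℕ) : ℤ :=
  if D = 0 then 1
  else if h : ∃ p : ℤ × ℕ, IsFundamentalDiscriminant p.1 ∧ D = p.1 * (p.2 : ℤ) ^ 2 then
    kron h.choose.1 (m / m.gcd h.choose.2)
  else 0

/-- `ψ̄_t(m) = φ(m²)⁻¹ ∑_{n mod m², (n,m)=1} ψ_{t²-4n}(m)`. -/
noncomputable def psibar (t : ℤ) (m : ℕ) : ℝ :=
  (Nat.totient (m ^ 2) : ℝ)⁻¹ *
    ∑ n ∈ Finset.range (m ^ 2), if Nat.gcd n m = 1 then (psi (t ^ 2 - 4 * n) m : ℝ) else 0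

/-- `L(1, ψ_D) = ∑_{m ≥ 1} ψ_D(m)/m`, as the limit of the partial sums
(the series is in general only conditionally convergent). -/
noncomputable def LpsiOne (D : ℤ) : ℝ :=
  Filter.limUnder Filter.atTop (fun X : ℕ => ∑ m ∈ Finset.Icc 1 X, (psi D m : ℝ) / m)

/-- `L(1, ψ̄_t) = ∑_{m ≥ 1} ψ̄_t(m)/m`. -/
noncomputable def LpsibarOne (t : ℤ) : ℝ := ∑' m : ℕ, psibar t (m + 1) / (m + 1)

noncomputable def eps (d : ℤ) : ℤ :=
  if d % 2 = 0 then 0 else if d % 8 = 1 ∨ d % 8 = 7 then 1 else -1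

lemma kron_def (d : ℤ) (m : ℕ) :
    kron d m = eps d ^ (m.factorization 2) * jacobiSym d (m / 2 ^ (m.factorization 2)) := rfl

lemma kron_one (d : ℤ) : kron d 1 = 1 := by
  simp [kron]

lemma kron_mul (d : ℤ) {a b : ℕ} (ha : a ≠ 0) (hb : b ≠ 0) :
    kron d (a * b) = kron d a * kron d b := by
  rw [kron_def, kron_def, kron_def, Nat.factorization_mul ha hb]
  simp only [Finsupp.add_apply]
  have h2 : (a * b) / 2 ^ (a.factorization 2 + b.factorization 2)
      = (a / 2 ^ a.factorization 2) * (b / 2 ^ b.factorization 2) := by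
    rw [pow_add]
    exact (Nat.div_mul_div_comm (Nat.ordProj_dvd a 2) (Nat.ordProj_dvd b 2)).symm
  rw [h2, jacobiSym.mul_right' d (Nat.ordCompl_pos 2 ha).ne' (Nat.ordCompl_pos 2 hb).ne',
    pow_add]
  ring

lemma kron_two_pow (d : ℤ) (e : ℕ) : kron d (2 ^ e) = eps d ^ e := by
  rw [kron_def, Nat.Prime.factorization_pow Nat.prime_two]
  simp

lemma kron_odd_prime_pow {p : ℕ} (hp : p.Prime) (hp2 : p ≠ 2) (d : ℤ) (e : ℕ) :
    kron d (p ^ e) = (@legendreSym p ⟨hp⟩ d) ^ e := by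
  have h2 : (p ^ e).factorization 2 = 0 := by
    rw [hp.factorization_pow]
    simp only [Finsupp.single_apply]
    rw [if_neg (Ne.symm (Ne.symm hp2))]
  rw [kron_def, h2]
  simp only [pow_zero, one_mul, Nat.div_one]
  rw [jacobiSym.pow_right, @jacobiSym.legendreSym.to_jacobiSym p ⟨hp⟩ d]

lemma odd_sq_mod_eight {w : ℤ} (hw : w % 2 = 1) : w ^ 2 % 8 = 1 := by
  obtain ⟨c, rfl⟩ : ∃ c, w = 2 * c + 1 := ⟨w / 2, by omega⟩
  obtain ⟨k, hk⟩ := Int.even_mul_succ_self c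
  have h : (2 * c + 1) ^ 2 = 8 * k + 1 := by rw [show (2*c+1)^2 = 4 * (c * (c+1)) + 1 by ring, hk]; ring
  rw [h]; omega

lemma mod4_ne_three_of_mod8 {x d : ℤ} (h8 : x % 8 = d % 8) (h4 : d % 4 = 1) : x % 4 ≠ 3 := by
  omega

lemma mod4_eq_three_of_mod8 {x m : ℤ} (h8 : x % 8 = m % 8) (h4 : m % 4 = 3) : x % 4 = 3 := by
  omega

lemma eps_congr {q q' : ℤ} (h : q % 8 = q' % 8) : eps q = eps q' := by
  unfold eps
  have h2 : q % 2 = q' % 2 := by omega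
  rw [h, h2]

lemma not_four_dvd_of_squarefree {d : ℤ} (hsf : Squarefree d) : ¬ (4 : ℤ) ∣ d := by
  intro h4
  exact (Int.isUnit_iff.1 (hsf 2 (by rwa [show (2:ℤ)*2 = 4 by norm_num]))).elim
    (by norm_num) (by norm_num)

lemma exists_fund_decomp {D : ℤ} (hD : IsDiscriminant D) (h0 : D ≠ 0) :
    ∃ p : ℤ × ℕ, IsFundamentalDiscriminant p.1 ∧ D = p.1 * (p.2 : ℤ) ^ 2 := by
  obtain ⟨a, b, hab, hsfa⟩ := Nat.sq_mul_squarefree D.natAbs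
  set d : ℤ := D.sign * a with hd
  have hsgn : D.sign = 1 ∨ D.sign = -1 := by
    rcases Int.lt_or_lt_of_ne h0 with h | h
    · right; exact Int.sign_eq_neg_one_of_neg h
    · left; exact Int.sign_eq_one_of_pos h
  have hdb : D = d * (b : ℤ) ^ 2 := by
    have hs := Int.sign_mul_natAbs D
    rw [← hs, ← hab]; push_cast [hd]; ring
  have hdabs : d.natAbs = a := by
    rcases hsgn with h | h <;> rw [hd, h] <;> simp
  have hsf : Squarefree d := Int.squarefree_natAbs.1 (hdabs ▸ hsfa)
  have h4 : ¬ (4 : ℤ) ∣ d := not_four_dvd_of_squarefree hsf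
  have hd2 : d % 4 = 1 ∨ d % 4 = 2 ∨ d % 4 = 3 := by
    have : ¬ d % 4 = 0 := fun h => h4 (Int.dvd_of_emod_eq_zero h)
    omega
  rcases hd2 with h1 | h23
  · exact ⟨(d, b), Or.inl ⟨hsf, h1⟩, hdb⟩
  · have hbeven : ∃ c, b = 2 * c := by
      by_contra hodd
      have hb1 : (b : ℤ) % 2 = 1 := by
        rcases Nat.even_or_odd b with ⟨c, hc⟩ | ⟨c, hc⟩
        · exact absurd ⟨c, by omega⟩ hodd
        · subst hc; push_cast; omega
      have h8 := odd_sq_mod_eight hb1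
      obtain ⟨k, hk⟩ : ∃ k, ((b : ℤ)) ^ 2 = 8 * k + 1 := ⟨(b : ℤ) ^ 2 / 8, by omega⟩
      have hD4 : D % 4 = d % 4 := by
        rw [hdb, hk, show d * (8 * k + 1) = d + 4 * (d * (2 * k)) by ring,
          Int.add_mul_emod_self_left]
      rcases hD with h | h <;> omega
    obtain ⟨c, rfl⟩ := hbeven
    exact ⟨(4 * d, c), Or.inr ⟨d, rfl, hsf, by omega⟩, by rw [hdb]; push_cast; ring⟩

lemma psi_zero (m : ℕ) : psi 0 m = 1 := by simp [psi]

lemma psi_eq {D : ℤ} (h0 : D ≠ 0)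
    (hex : ∃ p : ℤ × ℕ, IsFundamentalDiscriminant p.1 ∧ D = p.1 * (p.2 : ℤ) ^ 2) (m : ℕ) :
    psi D m = kron hex.choose.1 (m / m.gcd hex.choose.2) := by
  rw [psi, if_neg h0, dif_pos hex]

lemma psi_mul (D : ℤ) {a b : ℕ} (ha : a ≠ 0) (hb : b ≠ 0) (hab : Nat.Coprime a b) :
    psi D (a * b) = psi D a * psi D b := by
  by_cases h0 : D = 0
  · simp [h0, psi_zero]
  by_cases hex : ∃ p : ℤ × ℕ, IsFundamentalDiscriminant p.1 ∧ D = p.1 * (p.2 : ℤ) ^ 2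
  · rw [psi_eq h0 hex, psi_eq h0 hex, psi_eq h0 hex]
    set l := hex.choose.2 with hl
    have hg : (a * b).gcd l = a.gcd l * b.gcd l := by
      rw [Nat.gcd_comm, Nat.Coprime.gcd_mul l hab, Nat.gcd_comm l a, Nat.gcd_comm l b]
    have h1 : a.gcd l ∣ a := Nat.gcd_dvd_left a l
    have h2 : b.gcd l ∣ b := Nat.gcd_dvd_left b l
    have hpa : 0 < a := Nat.pos_of_ne_zero ha
    have hpb : 0 < b := Nat.pos_of_ne_zero hb
    have hga : 0 < a.gcd l := Nat.gcd_pos_of_pos_left l hpa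
    have hgb : 0 < b.gcd l := Nat.gcd_pos_of_pos_left l hpb
    have hdiv : (a * b) / (a.gcd l * b.gcd l) = (a / a.gcd l) * (b / b.gcd l) :=
      (Nat.div_mul_div_comm h1 h2).symm
    rw [hg, hdiv, kron_mul _ (Nat.div_pos (Nat.le_of_dvd hpa h1) hga).ne'
      (Nat.div_pos (Nat.le_of_dvd hpb h2) hgb).ne']
  · rw [psi, if_neg h0, dif_neg hex, psi, if_neg h0, dif_neg hex, psi, if_neg h0, dif_neg hex]
    ring

lemma gcd_prime_pow {p : ℕ} (hp : p.Prime) (e : ℕ) {l : ℕ} (hl : l ≠ 0) :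
    Nat.gcd (p ^ e) l = p ^ min e (l.factorization p) := by
  apply Nat.dvd_antisymm
  · obtain ⟨k, hk, hdvd⟩ := (Nat.dvd_prime_pow hp).1 (Nat.gcd_dvd_left (p ^ e) l)
    have hkl : p ^ k ∣ l := hdvd ▸ Nat.gcd_dvd_right (p ^ e) l
    have := (Nat.Prime.pow_dvd_iff_le_factorization hp hl).1 hkl
    rw [hdvd]
    exact pow_dvd_pow p (le_min hk this)
  · exact Nat.dvd_gcd (pow_dvd_pow p (min_le_left _ _))
      ((pow_dvd_pow p (min_le_right _ _)).trans (Nat.ordProj_dvd l p))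

lemma psi_odd_eval {p : ℕ} (hp : p.Prime) (hp2 : p ≠ 2) {e : ℕ} (he : e ≠ 0) {D : ℤ}
    (h0 : D ≠ 0) (hD : IsDiscriminant D) :
    psi D (p ^ e) =
      if 2 * e ≤ D.natAbs.factorization p then 1
      else if D.natAbs.factorization p % 2 = 1 then 0
      else (@legendreSym p ⟨hp⟩ (D / (p : ℤ) ^ D.natAbs.factorization p)) ^
        (e - D.natAbs.factorization p / 2) := by
  haveI : Fact p.Prime := ⟨hp⟩
  have hex := exists_fund_decomp hD h0
  obtain ⟨hfund, hDeq⟩ := hex.choose_spec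
  set d := hex.choose.1 with hdd
  set l := hex.choose.2 with hll
  have hd0 : d ≠ 0 := by rintro h; rw [h] at hDeq; simp at hDeq; exact h0 hDeq
  have hl0 : l ≠ 0 := by rintro h; rw [h] at hDeq; simp at hDeq; exact h0 hDeq
  set lam := l.factorization p with hlam
  set w := l / p ^ lam with hwdef
  have hlw : l = p ^ lam * w := (Nat.ordProj_mul_ordCompl_eq_self l p).symm
  have hpw : ¬ p ∣ w := Nat.not_dvd_ordCompl hp hl0
  have hw0 : w ≠ 0 := by rintro h; rw [h, mul_zero] at hlw; exact hl0 hlw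
  have hpsi : psi D (p ^ e) = (legendreSym p d) ^ (e - min e lam) := by
    rw [psi_eq h0 hex (p ^ e), show (p ^ e).gcd l = p ^ min e lam from gcd_prime_pow hp e hl0,
      Nat.pow_div (min_le_left e lam) hp.pos]
    exact kron_odd_prime_pow hp hp2 d _
  have hvd : d.natAbs.factorization p ≤ 1 := by
    rcases hfund with ⟨hsq, -⟩ | ⟨m, hm, hsqm, -⟩
    · exact (Nat.squarefree_iff_factorization_le_one (Int.natAbs_ne_zero.2 hd0)).1
        (Int.squarefree_natAbs.2 hsq) p
    · have hm0 : m ≠ 0 := hsqm.ne_zero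
      have habs : d.natAbs = 4 * m.natAbs := by rw [hm, Int.natAbs_mul]; rfl
      rw [habs, Nat.factorization_mul (by norm_num) (Int.natAbs_ne_zero.2 hm0)]
      simp only [Finsupp.coe_add, Pi.add_apply]
      have h4 : (4 : ℕ).factorization p = 0 := by
        apply Nat.factorization_eq_zero_of_not_dvd
        intro hdvd
        have : p ∣ 2 := hp.dvd_of_dvd_pow ((show (4:ℕ) = 2 ^ 2 by norm_num) ▸ hdvd)
        exact hp2 ((Nat.prime_dvd_prime_iff_eq hp Nat.prime_two).1 this)
      rw [h4, zero_add]
      exact (Nat.squarefree_iff_factorization_le_one (Int.natAbs_ne_zero.2 hm0)).1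
        (Int.squarefree_natAbs.2 hsqm) p
  have hw2 : (w ^ 2).factorization p = 0 := by
    rw [Nat.factorization_pow]
    simp [Nat.factorization_eq_zero_of_not_dvd hpw]
  have hDabs : D.natAbs = d.natAbs * p ^ (2 * lam) * w ^ 2 := by
    have : D.natAbs = d.natAbs * l ^ 2 := by
      rw [hDeq, Int.natAbs_mul, Int.natAbs_pow]; simp
    rw [this, hlw]; ring
  have ha : D.natAbs.factorization p = d.natAbs.factorization p + 2 * lam := by
    rw [hDabs, Nat.factorization_mul (mul_ne_zero (Int.natAbs_ne_zero.2 hd0)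
        (pow_ne_zero _ hp.ne_zero)) (pow_ne_zero _ hw0),
      Nat.factorization_mul (Int.natAbs_ne_zero.2 hd0) (pow_ne_zero _ hp.ne_zero)]
    simp only [Finsupp.coe_add, Pi.add_apply]
    rw [hw2, Nat.Prime.factorization_pow hp]
    simp [Finsupp.single_apply]
  set aD := D.natAbs.factorization p with haD
  by_cases hcase : e ≤ lam
  · rw [hpsi, min_eq_left hcase, Nat.sub_self, pow_zero, if_pos (by omega)]
  · push_neg at hcase
    rw [hpsi, min_eq_right hcase.le]
    rcases Nat.le_one_iff_eq_zero_or_eq_one.1 hvd with hv | hv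
    · rw [if_neg (by omega), if_neg (by omega)]
      have hq : D / (p : ℤ) ^ aD = d * (w : ℤ) ^ 2 := by
        have hee : D = (p : ℤ) ^ aD * (d * (w : ℤ) ^ 2) := by
          rw [ha, hv, zero_add, hDeq, hlw]; push_cast; ring
        rw [hee, Int.mul_ediv_cancel_left _
          (pow_ne_zero _ (Int.natCast_ne_zero.2 hp.ne_zero))]
      have hwz : (((w : ℤ)) : ZMod p) ≠ 0 := by
        push_cast
        rw [Ne, ZMod.natCast_eq_zero_iff]
        exact hpw
      rw [hq, legendreSym.mul, legendreSym.sq_one' (p := p) hwz, mul_one]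
      congr 1
      omega
    · rw [if_neg (by omega), if_pos (by omega)]
      have hpd : (p : ℤ) ∣ d := by
        have hnd : p ∣ d.natAbs := Nat.dvd_of_factorization_pos (by omega)
        exact Int.dvd_natAbs.1 (Int.natCast_dvd_natCast.2 hnd)
      have hz : legendreSym p d = 0 := (legendreSym.eq_zero_iff p d).2
        (by rw [ZMod.intCast_zmod_eq_zero_iff_dvd]; exact hpd)
      rw [hz, zero_pow (by omega)]

lemma psi_two_eval {e : ℕ} (he : e ≠ 0) {D : ℤ} (h0 : D ≠ 0) (hD : IsDiscriminant D) :
    psi D (2 ^ e) =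
      if 2 * e + 2 ≤ D.natAbs.factorization 2 then 1
      else if D.natAbs.factorization 2 % 2 = 1 then 0
      else if (D / (2 : ℤ) ^ D.natAbs.factorization 2) % 4 = 3 then 0
      else eps (D / (2 : ℤ) ^ D.natAbs.factorization 2) ^ (e - D.natAbs.factorization 2 / 2) := by
  have hex := exists_fund_decomp hD h0
  obtain ⟨hfund, hDeq⟩ := hex.choose_spec
  set d := hex.choose.1 with hdd
  set l := hex.choose.2 with hll
  have hd0 : d ≠ 0 := by rintro h; rw [h] at hDeq; simp at hDeq; exact h0 hDeq
  have hl0 : l ≠ 0 := by rintro h; rw [h] at hDeq; simp at hDeq; exact h0 hDeq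
  set lam := l.factorization 2 with hlam
  set w := l / 2 ^ lam with hwdef
  have hlw : l = 2 ^ lam * w := (Nat.ordProj_mul_ordCompl_eq_self l 2).symm
  have hpw : ¬ 2 ∣ w := Nat.not_dvd_ordCompl Nat.prime_two hl0
  have hw0 : w ≠ 0 := by rintro h; rw [h, mul_zero] at hlw; exact hl0 hlw
  have hwodd : ((w : ℤ)) % 2 = 1 := by
    have : w % 2 = 1 := Nat.two_dvd_ne_zero.mp hpw
    omega
  obtain ⟨k, hk⟩ : ∃ k, ((w : ℤ)) ^ 2 = 8 * k + 1 := by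
    have := odd_sq_mod_eight hwodd
    exact ⟨(w : ℤ) ^ 2 / 8, by omega⟩
  have hpsi : psi D (2 ^ e) = eps d ^ (e - min e lam) := by
    have hgcd : ((2 : ℕ) ^ e).gcd l = 2 ^ min e lam := gcd_prime_pow Nat.prime_two e hl0
    rw [psi_eq h0 hex (2 ^ e), hgcd, Nat.pow_div (min_le_left e lam) (by norm_num)]
    exact kron_two_pow d _
  have hw2 : (w ^ 2).factorization 2 = 0 := by
    rw [Nat.factorization_pow]
    simp [Nat.factorization_eq_zero_of_not_dvd hpw]
  have hDabs : D.natAbs = d.natAbs * 2 ^ (2 * lam) * w ^ 2 := by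
    have : D.natAbs = d.natAbs * l ^ 2 := by
      rw [hDeq, Int.natAbs_mul, Int.natAbs_pow]; simp
    rw [this, hlw]; ring
  have ha : D.natAbs.factorization 2 = d.natAbs.factorization 2 + 2 * lam := by
    rw [hDabs, Nat.factorization_mul (mul_ne_zero (Int.natAbs_ne_zero.2 hd0)
        (pow_ne_zero _ two_ne_zero)) (pow_ne_zero _ hw0),
      Nat.factorization_mul (Int.natAbs_ne_zero.2 hd0) (pow_ne_zero _ two_ne_zero)]
    simp only [Finsupp.coe_add, Pi.add_apply]
    rw [hw2, Nat.Prime.factorization_pow Nat.prime_two]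
    simp [Finsupp.single_apply]
  set aD := D.natAbs.factorization 2 with haD
  have hqgen : ∀ Q : ℤ, D = (2 : ℤ) ^ aD * Q → D / (2 : ℤ) ^ aD = Q := by
    intro Q hQ
    rw [hQ, Int.mul_ediv_cancel_left _ (pow_ne_zero _ two_ne_zero)]
  rcases hfund with ⟨hsq, hd4⟩ | ⟨m, hm, hsqm, hm4⟩
  · -- d odd, d % 4 = 1
    have hvd : d.natAbs.factorization 2 = 0 := by
      apply Nat.factorization_eq_zero_of_not_dvd
      omega
    have haD2 : aD = 2 * lam := by omega
    have hq : D / (2 : ℤ) ^ aD = d * (w : ℤ) ^ 2 := by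
      apply hqgen
      rw [haD2, hDeq, hlw]; push_cast; ring
    have hq8 : (d * (w : ℤ) ^ 2) % 8 = d % 8 := by
      rw [hk, show d * (8 * k + 1) = d + 8 * (d * k) by ring, Int.add_mul_emod_self_left]
    have heps : eps (D / (2 : ℤ) ^ aD) = eps d := by
      rw [hq]; exact eps_congr hq8
    have hq4 : (D / (2 : ℤ) ^ aD) % 4 ≠ 3 := by
      rw [hq]; exact mod4_ne_three_of_mod8 hq8 hd4
    by_cases hcase : e + 1 ≤ lam
    · rw [hpsi, min_eq_left (by omega), Nat.sub_self, pow_zero, if_pos (by omega)]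
    · rw [hpsi, min_eq_right (by omega), if_neg (by omega), if_neg (by omega), if_neg hq4, heps]
      congr 1
      omega
  · -- d = 4 * m
    have hm0 : m ≠ 0 := hsqm.ne_zero
    have hdeven : d % 2 = 0 := by omega
    have hepsd : eps d = 0 := by rw [eps, if_pos hdeven]
    have hlhs : psi D (2 ^ e) = if e ≤ lam then 1 else 0 := by
      rw [hpsi, hepsd]
      by_cases hcase : e ≤ lam
      · rw [min_eq_left hcase, Nat.sub_self, pow_zero, if_pos hcase]
      · push_neg at hcase
        rw [min_eq_right hcase.le, zero_pow (by omega), if_neg (by omega)]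
    rcases hm4 with hm2 | hm3
    · -- m % 4 = 2
      obtain ⟨mt, hmt⟩ : ∃ mt, m = 2 * mt := ⟨m / 2, by omega⟩
      have hmtodd : mt % 2 = 1 := by omega
      have hvd : d.natAbs.factorization 2 = 3 := by
        have habs : d.natAbs = 8 * mt.natAbs := by
          rw [hm, hmt, show (4 : ℤ) * (2 * mt) = 8 * mt by ring, Int.natAbs_mul]; rfl
        have hmtn0 : mt.natAbs ≠ 0 := by omega
        rw [habs, show (8 : ℕ) = 2 ^ 3 by norm_num,
          Nat.factorization_mul (by norm_num) hmtn0]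
        simp only [Finsupp.coe_add, Pi.add_apply]
        rw [Nat.Prime.factorization_pow Nat.prime_two,
          Nat.factorization_eq_zero_of_not_dvd (by omega)]
        simp [Finsupp.single_apply]
      have haD2 : aD = 3 + 2 * lam := by omega
      rw [hlhs]
      by_cases hcase : e ≤ lam
      · rw [if_pos hcase, if_pos (by omega)]
      · rw [if_neg hcase, if_neg (by omega), if_pos (by omega)]
    · -- m % 4 = 3
      have hvd : d.natAbs.factorization 2 = 2 := by
        have habs : d.natAbs = 4 * m.natAbs := by rw [hm, Int.natAbs_mul]; rfl
        rw [habs, show (4 : ℕ) = 2 ^ 2 by norm_num,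
          Nat.factorization_mul (by norm_num) (Int.natAbs_ne_zero.2 hm0)]
        simp only [Finsupp.coe_add, Pi.add_apply]
        rw [Nat.Prime.factorization_pow Nat.prime_two,
          Nat.factorization_eq_zero_of_not_dvd (by omega)]
        simp [Finsupp.single_apply]
      have haD2 : aD = 2 + 2 * lam := by omega
      have hq : D / (2 : ℤ) ^ aD = m * (w : ℤ) ^ 2 := by
        apply hqgen
        rw [haD2, hDeq, hm, hlw]; push_cast; ring
      have hq8 : (m * (w : ℤ) ^ 2) % 8 = m % 8 := by
        rw [hk, show m * (8 * k + 1) = m + 8 * (m * k) by ring, Int.add_mul_emod_self_left]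
      have hq4 : (D / (2 : ℤ) ^ aD) % 4 = 3 := by
        rw [hq]; exact mod4_eq_three_of_mod8 hq8 hm3
      rw [hlhs]
      by_cases hcase : e ≤ lam
      · rw [if_pos hcase, if_pos (by omega)]
      · rw [if_neg hcase, if_neg (by omega), if_neg (by omega), if_pos hq4]

lemma int_pow_dvd_iff {p : ℕ} (hp : p.Prime) {k : ℕ} {D : ℤ} (h0 : D ≠ 0) :
    ((p : ℤ)) ^ k ∣ D ↔ k ≤ D.natAbs.factorization p := by
  rw [← Nat.Prime.pow_dvd_iff_le_factorization hp (Int.natAbs_ne_zero.2 h0),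
    ← Int.natAbs_dvd_natAbs, Int.natAbs_pow]
  simp

lemma mod8_to_mod4 {x y : ℤ} (h : x % 8 = y % 8) : x % 4 = y % 4 := by omega

lemma psi_one {D : ℤ} (hD : IsDiscriminant D) : psi D 1 = 1 := by
  by_cases h0 : D = 0
  · rw [h0, psi_zero]
  · have hex := exists_fund_decomp hD h0
    rw [psi_eq h0 hex 1]
    have h1 : (1 : ℕ) / Nat.gcd 1 hex.choose.2 = 1 := by simp
    rw [h1, kron_one]

lemma psi_prime_pow_dvd {p e : ℕ} (hp : p.Prime) (he : e ≠ 0) {D : ℤ}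
    (hD : IsDiscriminant D) (hdvd : 4 * (p : ℤ) ^ (2 * e) ∣ D) : psi D (p ^ e) = 1 := by
  by_cases h0 : D = 0
  · rw [h0, psi_zero]
  by_cases hp2 : p = 2
  · subst hp2
    rw [psi_two_eval he h0 hD, if_pos ?_]
    have : (2 : ℤ) ^ (2 * e + 2) ∣ D := by
      have : (2 : ℤ) ^ (2 * e + 2) = 4 * (2 : ℤ) ^ (2 * e) := by ring
      rw [this]; exact hdvd
    exact (int_pow_dvd_iff Nat.prime_two h0).1 (by exact_mod_cast this)
  · rw [psi_odd_eval hp hp2 he h0 hD, if_pos ?_]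
    have : (p : ℤ) ^ (2 * e) ∣ D := (dvd_mul_left _ 4).trans hdvd
    exact (int_pow_dvd_iff hp h0).1 this

lemma val_facts {p : ℕ} (hp : p.Prime) {k : ℕ} {D D' : ℤ} (h0 : D ≠ 0) (h0' : D' ≠ 0)
    (hdvd : ((p : ℤ)) ^ k ∣ D - D') (hlt : D.natAbs.factorization p < k) :
    D'.natAbs.factorization p = D.natAbs.factorization p ∧
      ∀ j, D.natAbs.factorization p + j ≤ k →
        ((p : ℤ)) ^ j ∣ (D / (p : ℤ) ^ (D.natAbs.factorization p)
          - D' / (p : ℤ) ^ (D.natAbs.factorization p)) := by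
  set a := D.natAbs.factorization p with ha
  have hpD : (p : ℤ) ^ a ∣ D := (int_pow_dvd_iff hp h0).2 le_rfl
  have hpD' : (p : ℤ) ^ a ∣ D' := by
    have h1 : (p : ℤ) ^ a ∣ D - D' := (pow_dvd_pow _ hlt.le).trans hdvd
    have := dvd_sub hpD h1
    simpa using this
  have hnot : ¬ (p : ℤ) ^ (a + 1) ∣ D := fun hcon => by
    have := (int_pow_dvd_iff hp h0).1 hcon; omega
  have haeq : D'.natAbs.factorization p = a := by
    have hge : a ≤ D'.natAbs.factorization p := (int_pow_dvd_iff hp h0').1 hpD'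
    by_contra hne
    have hgt : a + 1 ≤ D'.natAbs.factorization p := by omega
    have h1 : (p : ℤ) ^ (a + 1) ∣ D' := (int_pow_dvd_iff hp h0').2 hgt
    have h2 : (p : ℤ) ^ (a + 1) ∣ D - D' := (pow_dvd_pow _ (by omega : a + 1 ≤ k)).trans hdvd
    exact hnot (by simpa using dvd_add h2 h1)
  refine ⟨haeq, fun j hj => ?_⟩
  have hDq : D = (p : ℤ) ^ a * (D / (p : ℤ) ^ a) := (Int.mul_ediv_cancel' hpD).symm
  have hDq' : D' = (p : ℤ) ^ a * (D' / (p : ℤ) ^ a) := (Int.mul_ediv_cancel' hpD').symm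
  have hsub : (p : ℤ) ^ (a + j) ∣ (p : ℤ) ^ a * (D / (p : ℤ) ^ a - D' / (p : ℤ) ^ a) := by
    rw [mul_sub, ← hDq, ← hDq']
    exact (pow_dvd_pow _ hj).trans hdvd
  rw [pow_add] at hsub
  exact (mul_dvd_mul_iff_left (pow_ne_zero a (Int.natCast_ne_zero.2 hp.ne_zero))).1 hsub

lemma psi_prime_pow_congr {p e : ℕ} (hp : p.Prime) (he : e ≠ 0) {D D' : ℤ}
    (hD : IsDiscriminant D) (hD' : IsDiscriminant D')
    (hdvd : 4 * (p : ℤ) ^ (2 * e) ∣ D - D') : psi D (p ^ e) = psi D' (p ^ e) := by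
  by_cases h0 : D = 0
  · rw [h0, psi_zero]
    symm
    apply psi_prime_pow_dvd hp he hD'
    have : 4 * (p : ℤ) ^ (2 * e) ∣ -D' := by simpa [h0] using hdvd
    exact dvd_neg.1 this
  by_cases h0' : D' = 0
  · rw [h0', psi_zero]
    apply psi_prime_pow_dvd hp he hD
    simpa [h0'] using hdvd
  by_cases hp2 : p = 2
  · subst hp2
    rw [psi_two_eval he h0 hD, psi_two_eval he h0' hD']
    have hdvd2 : ((2 : ℕ) : ℤ) ^ (2 * e + 2) ∣ D - D' := by
      have h44 : ((2 : ℕ) : ℤ) ^ (2 * e + 2) = 4 * (2 : ℤ) ^ (2 * e) := by push_cast; ring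
      rw [h44]
      exact_mod_cast hdvd
    set a := D.natAbs.factorization 2 with ha
    by_cases hbig : 2 * e + 2 ≤ a
    · have hD2 : ((2 : ℕ) : ℤ) ^ (2 * e + 2) ∣ D :=
        (int_pow_dvd_iff Nat.prime_two h0).2 (by omega)
      have hD2' : ((2 : ℕ) : ℤ) ^ (2 * e + 2) ∣ D' := by
        have := dvd_sub hD2 hdvd2; simpa using this
      rw [if_pos hbig, if_pos ((int_pow_dvd_iff Nat.prime_two h0').1 hD2')]
    · obtain ⟨haeq, hj⟩ := val_facts Nat.prime_two h0 h0' hdvd2 (by omega)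
      rw [haeq, if_neg hbig, if_neg hbig]
      by_cases hodd : a % 2 = 1
      · rw [if_pos hodd, if_pos hodd]
      · rw [if_neg hodd, if_neg hodd]
        set q := D / (2 : ℤ) ^ a with hq
        set q' := D' / (2 : ℤ) ^ a with hq'
        have hqq : q = D / ((2 : ℕ) : ℤ) ^ a := by norm_num; exact hq
        have hqq' : q' = D' / ((2 : ℕ) : ℤ) ^ a := by norm_num; exact hq'
        by_cases hae : a = 2 * e
        · have h4 : (4 : ℤ) ∣ q - q' := by
            have := hj 2 (by omega)
            rw [← hqq, ← hqq'] at this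
            exact_mod_cast this
          have hq4 : q % 4 = q' % 4 := by omega
          rw [hq4]
          by_cases h3 : q' % 4 = 3
          · rw [if_pos h3, if_pos h3]
          · have hexp : e - a / 2 = 0 := by omega
            rw [if_neg h3, if_neg h3, hexp, pow_zero, pow_zero]
        · have h8 : (8 : ℤ) ∣ q - q' := by
            have := hj 3 (by omega)
            rw [← hqq, ← hqq'] at this
            exact_mod_cast this
          have hq8 : q % 8 = q' % 8 := by omega
          rw [mod8_to_mod4 hq8, eps_congr hq8]
  · haveI : Fact p.Prime := ⟨hp⟩
    rw [psi_odd_eval hp hp2 he h0 hD, psi_odd_eval hp hp2 he h0' hD']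
    have hdvd2 : ((p : ℕ) : ℤ) ^ (2 * e) ∣ D - D' := (dvd_mul_left _ 4).trans hdvd
    set a := D.natAbs.factorization p with ha
    by_cases hbig : 2 * e ≤ a
    · have hD2 : ((p : ℕ) : ℤ) ^ (2 * e) ∣ D := (int_pow_dvd_iff hp h0).2 (by omega)
      have hD2' : ((p : ℕ) : ℤ) ^ (2 * e) ∣ D' := by
        have := dvd_sub hD2 hdvd2; simpa using this
      rw [if_pos hbig, if_pos ((int_pow_dvd_iff hp h0').1 hD2')]
    · obtain ⟨haeq, hj⟩ := val_facts hp h0 h0' hdvd2 (by omega)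
      rw [haeq, if_neg hbig, if_neg hbig]
      by_cases hodd : a % 2 = 1
      · rw [if_pos hodd, if_pos hodd]
      · rw [if_neg hodd, if_neg hodd]
        have hpq : (p : ℤ) ∣ (D / (p : ℤ) ^ a - D' / (p : ℤ) ^ a) := by
          have := hj 1 (by omega)
          simpa using this
        have hmod : (D / (p : ℤ) ^ a) % p = (D' / (p : ℤ) ^ a) % p :=
          Int.emod_eq_emod_iff_emod_sub_eq_zero.2 (Int.emod_eq_zero_of_dvd hpq)
        rw [legendreSym.mod p (D / (p : ℤ) ^ a), legendreSym.mod p (D' / (p : ℤ) ^ a), hmod]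

lemma psi_congr (m : ℕ) : ∀ {D D' : ℤ}, IsDiscriminant D → IsDiscriminant D' →
    (4 * (m : ℤ) ^ 2 ∣ D - D') → psi D m = psi D' m := by
  induction m using Nat.recOnPosPrimePosCoprime with
  | prime_pow p n hp hn =>
    intro D D' hD hD' hdvd
    have hdvd' : 4 * (p : ℤ) ^ (2 * n) ∣ D - D' := by
      have : ((p ^ n : ℕ) : ℤ) ^ 2 = (p : ℤ) ^ (2 * n) := by push_cast; ring
      rwa [this] at hdvd
    exact psi_prime_pow_congr hp hn.ne' hD hD' hdvd'
  | zero =>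
    intro D D' hD hD' hdvd
    have : D = D' := by
      have : D - D' = 0 := by simpa using hdvd
      omega
    rw [this]
  | one =>
    intro D D' hD hD' _
    rw [psi_one hD, psi_one hD']
  | coprime a b ha hb hab iha ihb =>
    intro D D' hD hD' hdvd
    have ha0 : a ≠ 0 := by omega
    have hb0 : b ≠ 0 := by omega
    rw [psi_mul D ha0 hb0 hab, psi_mul D' ha0 hb0 hab,
      iha hD hD' (dvd_trans ⟨(b : ℤ) ^ 2, by push_cast; ring⟩ hdvd),
      ihb hD hD' (dvd_trans ⟨(a : ℤ) ^ 2, by push_cast; ring⟩ hdvd)]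

lemma disc_t_sub (t : ℤ) (n : ℕ) : IsDiscriminant (t ^ 2 - 4 * n) := by
  rcases Int.even_or_odd t with ⟨c, hc⟩ | ⟨c, hc⟩
  · left
    rw [hc, show (c + c) ^ 2 - 4 * n = 4 * (c ^ 2 - n) by ring]
    exact Int.mul_emod_right 4 _
  · right
    rw [hc, show (2 * c + 1) ^ 2 - 4 * n = 1 + 4 * (c ^ 2 + c - n) by ring,
      Int.add_mul_emod_self_left]
    rfl

lemma gcd_mod_sq (m n : ℕ) : Nat.gcd (n % m ^ 2) m = Nat.gcd n m := by
  conv_rhs => rw [Nat.gcd_comm, Nat.gcd_rec]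
  rw [Nat.gcd_comm (n % m ^ 2) m, Nat.gcd_rec, Nat.mod_mod_of_dvd n (dvd_pow_self m two_ne_zero)]

lemma sum_range_zmod {N : ℕ} [NeZero N] (F : ℕ → ℝ) :
    ∑ x : ZMod N, F x.val = ∑ n ∈ Finset.range N, F n := by
  apply Finset.sum_nbij' (i := fun (x : ZMod N) => x.val) (j := fun n => (n : ZMod N))
  · intro x _
    exact Finset.mem_range.2 (ZMod.val_lt x)
  · intro n _
    exact Finset.mem_univ _
  · intro x _
    exact ZMod.natCast_rightInverse x
  · intro n hn
    rw [ZMod.val_natCast, Nat.mod_eq_of_lt (Finset.mem_range.1 hn)]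
  · intro x _
    rfl

lemma sum_crt {A B : ℕ} (hA : A ≠ 0) (hB : B ≠ 0) (hAB : Nat.Coprime A B) (f g : ℕ → ℝ) :
    ∑ n ∈ Finset.range (A * B), f (n % A) * g (n % B)
      = (∑ n ∈ Finset.range A, f n) * (∑ n ∈ Finset.range B, g n) := by
  haveI : NeZero A := ⟨hA⟩
  haveI : NeZero B := ⟨hB⟩
  haveI : NeZero (A * B) := ⟨mul_ne_zero hA hB⟩
  rw [← sum_range_zmod (fun n => f (n % A) * g (n % B)), ← sum_range_zmod f,
    ← sum_range_zmod g]
  let E := ZMod.chineseRemainder hAB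
  have hx : ∀ x : ZMod (A * B), E x = ((x.val : ZMod A), (x.val : ZMod B)) := by
    intro x
    conv_lhs => rw [show x = ((x.val : ℕ) : ZMod (A * B)) from (ZMod.natCast_rightInverse x).symm]
    rw [map_natCast]
    rfl
  calc ∑ x : ZMod (A * B), f (x.val % A) * g (x.val % B)
      = ∑ y : ZMod A × ZMod B, f (y.1.val) * g (y.2.val) := by
        apply Fintype.sum_equiv E.toEquiv
        intro x
        show f (x.val % A) * g (x.val % B) = f ((E x).1.val) * g ((E x).2.val)
        rw [hx x, ZMod.val_natCast, ZMod.val_natCast]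
    _ = ∑ a : ZMod A, ∑ b : ZMod B, f a.val * g b.val := Fintype.sum_prod_type _
    _ = (∑ x : ZMod A, f x.val) * (∑ x : ZMod B, g x.val) := by
        rw [Finset.sum_mul_sum]


/-- For each fixed `t`, the function `m ↦ ψ̄_t(m)` is multiplicative. -/
theorem psibar_multiplicative (t : ℤ) (m₁ m₂ : ℕ) (hm₁ : 0 < m₁) (hm₂ : 0 < m₂)
    (hcop : Nat.Coprime m₁ m₂) :
    psibar t (m₁ * m₂) = psibar t m₁ * psibar t m₂ := by
  have hA : m₁ ^ 2 ≠ 0 := pow_ne_zero _ hm₁.ne'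
  have hB : m₂ ^ 2 ≠ 0 := pow_ne_zero _ hm₂.ne'
  have hcop2 : Nat.Coprime (m₁ ^ 2) (m₂ ^ 2) := Nat.Coprime.pow 2 2 hcop
  have hpsic : ∀ (m : ℕ), m ≠ 0 → ∀ n : ℕ,
      psi (t ^ 2 - 4 * ((n % m ^ 2 : ℕ) : ℤ)) m = psi (t ^ 2 - 4 * (n : ℤ)) m := by
    intro m hm n
    apply psi_congr m (disc_t_sub t (n % m ^ 2)) (disc_t_sub t n)
    refine ⟨((n / m ^ 2 : ℕ) : ℤ), ?_⟩
    have hmod : ((n % m ^ 2 : ℕ) : ℤ) + (m : ℤ) ^ 2 * ((n / m ^ 2 : ℕ) : ℤ) = (n : ℤ) := by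
      exact_mod_cast congrArg (fun k : ℕ => (k : ℤ)) (Nat.mod_add_div n (m ^ 2))
    linear_combination (-4 : ℤ) * hmod
  have hpoint : ∀ n : ℕ,
      (if Nat.gcd n (m₁ * m₂) = 1 then (psi (t ^ 2 - 4 * n) (m₁ * m₂) : ℝ) else 0)
        = (if Nat.gcd (n % m₁ ^ 2) m₁ = 1
            then (psi (t ^ 2 - 4 * ((n % m₁ ^ 2 : ℕ) : ℤ)) m₁ : ℝ) else 0)
          * (if Nat.gcd (n % m₂ ^ 2) m₂ = 1
            then (psi (t ^ 2 - 4 * ((n % m₂ ^ 2 : ℕ) : ℤ)) m₂ : ℝ) else 0) := by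
    intro n
    simp only [gcd_mod_sq]
    by_cases h1 : Nat.gcd n m₁ = 1
    · by_cases h2 : Nat.gcd n m₂ = 1
      · rw [if_pos h1, if_pos h2, if_pos (Nat.Coprime.mul_right h1 h2),
          psi_mul _ hm₁.ne' hm₂.ne' hcop, hpsic m₁ hm₁.ne' n, hpsic m₂ hm₂.ne' n]
        push_cast
        ring
      · rw [if_neg h2, mul_zero, if_neg]
        intro hcon
        exact h2 (Nat.Coprime.coprime_dvd_right (dvd_mul_left m₂ m₁) hcon)
    · rw [if_neg h1, zero_mul, if_neg]
      intro hcon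
      exact h1 (Nat.Coprime.coprime_dvd_right (dvd_mul_right m₁ m₂) hcon)
  unfold psibar
  have htot : ((m₁ * m₂) ^ 2).totient = ((m₁ ^ 2).totient) * ((m₂ ^ 2).totient) := by
    rw [mul_pow, Nat.totient_mul hcop2]
  rw [htot]
  have hsum : ∑ n ∈ Finset.range ((m₁ * m₂) ^ 2),
      (if Nat.gcd n (m₁ * m₂) = 1 then (psi (t ^ 2 - 4 * n) (m₁ * m₂) : ℝ) else 0)
      = (∑ n ∈ Finset.range (m₁ ^ 2),
          (if Nat.gcd n m₁ = 1 then (psi (t ^ 2 - 4 * n) m₁ : ℝ) else 0))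
        * (∑ n ∈ Finset.range (m₂ ^ 2),
          (if Nat.gcd n m₂ = 1 then (psi (t ^ 2 - 4 * n) m₂ : ℝ) else 0)) := by
    rw [show (m₁ * m₂) ^ 2 = m₁ ^ 2 * m₂ ^ 2 from mul_pow m₁ m₂ 2]
    rw [Finset.sum_congr rfl (fun n _ => hpoint n)]
    exact sum_crt hA hB hcop2
      (fun k => if Nat.gcd k m₁ = 1 then (psi (t ^ 2 - 4 * k) m₁ : ℝ) else 0)
      (fun k => if Nat.gcd k m₂ = 1 then (psi (t ^ 2 - 4 * k) m₂ : ℝ) else 0)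
  rw [hsum]
  push_cast
  ring
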